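/- Let C be a neural code on n neurons, let q be the map adding a trivial on neuron, q(σ) = ι(σ) ∪ {Fin.last n}, and let C' = {q(σ) | σ ∈ C}. Then for every σ ∈ Δ(C), the link of q(σ) in Δ(C') equals the image under ι of the link of σ in Δ(C), i.e., Lk_{q(σ)}(Δ(C')) = {ι(ω) | ω ∈ Lk_σ(Δ(C))}. -/

import Mathlib

/-- The simplicial complex of a neural code. -/
def simComp {V : Type*} (C : Set (Finset V)) : Set (Finset V) := {α | ∃ β ∈ C, α ⊆ β}

/-- The link of `σ` in a family `K`. -/
def link {V : Type*} [DecidableEq V] (σ : Finset V) (K : Set (Finset V)) : Set (Finset V) :=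
  {ω ∈ K | ω ∩ σ = ∅ ∧ ω ∪ σ ∈ K}

/-- The map sending `α ⊆ Fin n` to its image in `Fin (n+1)` under `Fin.castSucc`. -/
def iota {n : ℕ} (α : Finset (Fin n)) : Finset (Fin (n+1)) := α.image Fin.castSucc

/-- Adding a trivial "on" neuron. -/
def addOn {n : ℕ} (σ : Finset (Fin n)) : Finset (Fin (n+1)) := iota σ ∪ {Fin.last n}

lemma iota_inter {n : ℕ} (a b : Finset (Fin n)) : iota (a ∩ b) = iota a ∩ iota b := by
  simp [iota, Finset.image_inter _ _ (Fin.castSucc_injective n)]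

lemma iota_subset {n : ℕ} {a b : Finset (Fin n)} : iota a ⊆ iota b ↔ a ⊆ b :=
  Finset.image_subset_image_iff (Fin.castSucc_injective n)

lemma iota_union {n : ℕ} (a b : Finset (Fin n)) : iota (a ∪ b) = iota a ∪ iota b :=
  Finset.image_union _ _

lemma last_not_mem_iota {n : ℕ} (a : Finset (Fin n)) : Fin.last n ∉ iota a := by
  simp [iota]

theorem stmt_6 (n : ℕ) (C : Set (Finset (Fin n)))
    (C' : Set (Finset (Fin (n+1)))) (hC' : C' = addOn '' C)
    (σ : Finset (Fin n)) (hσ : σ ∈ simComp C) :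
    link (addOn σ) (simComp C') = iota '' link σ (simComp C) := by
  subst hC'
  ext ω
  constructor
  · rintro ⟨⟨β', ⟨β, hβC, rfl⟩, hωβ⟩, hdisj, γ', ⟨γ, hγC, rfl⟩, hsub⟩
    -- last ∉ ω
    have hlast : Fin.last n ∉ ω := by
      intro h
      have : Fin.last n ∈ ω ∩ addOn σ := by
        simp [addOn, Finset.mem_inter, h]
      simp [hdisj] at this
    have hωι : ω ⊆ iota β := by
      intro x hx
      rcases Finset.mem_union.mp (hωβ hx) with h | h
      · exact h
      · simp only [Finset.mem_singleton] at h
        exact absurd (h ▸ hx) hlast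
    obtain ⟨ω₀, hω₀β, rfl⟩ := Finset.subset_image_iff.mp hωι
    refine ⟨ω₀, ⟨⟨β, hβC, hω₀β⟩, ?_, ⟨γ, hγC, ?_⟩⟩, rfl⟩
    · have h1 : iota (ω₀ ∩ σ) ⊆ Finset.image Fin.castSucc ω₀ ∩ addOn σ := by
        rw [iota_inter]
        exact Finset.inter_subset_inter (Finset.Subset.refl _) Finset.subset_union_left
      have h2 : iota (ω₀ ∩ σ) = ∅ := Finset.subset_empty.mp (hdisj ▸ h1)
      simpa [iota] using h2
    · rw [← iota_subset]
      intro x hx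
      rw [iota] at hx
      simp only [Finset.mem_image] at hx
      obtain ⟨y, hy, rfl⟩ := hx
      rcases Finset.mem_union.mp hy with h | h
      · have : Fin.castSucc y ∈ Finset.image Fin.castSucc ω₀ ∪ addOn σ :=
          Finset.mem_union_left _ (Finset.mem_image_of_mem _ h)
        rcases Finset.mem_union.mp (hsub this) with h' | h'
        · exact h'
        · simp only [Finset.mem_singleton] at h'
          exact absurd h' (Fin.ne_of_lt (Fin.castSucc_lt_last y))
      · have : Fin.castSucc y ∈ Finset.image Fin.castSucc ω₀ ∪ addOn σ :=
          Finset.mem_union_right _ (Finset.mem_union_left _ (Finset.mem_image_of_mem _ h))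
        rcases Finset.mem_union.mp (hsub this) with h' | h'
        · exact h'
        · simp only [Finset.mem_singleton] at h'
          exact absurd h' (Fin.ne_of_lt (Fin.castSucc_lt_last y))
  · rintro ⟨ω₀, ⟨⟨β, hβC, hω₀β⟩, hdisj, γ, hγC, hsub⟩, rfl⟩
    refine ⟨⟨addOn β, ⟨β, hβC, rfl⟩, ?_⟩, ?_, ⟨addOn γ, ⟨γ, hγC, rfl⟩, ?_⟩⟩
    · exact (iota_subset.mpr hω₀β).trans Finset.subset_union_left
    · rw [addOn, Finset.inter_union_distrib_left, ← iota_inter, hdisj]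
      refine Finset.union_eq_empty.mpr ⟨by simp [iota], ?_⟩
      refine Finset.eq_empty_of_forall_notMem ?_
      intro x hx
      simp only [Finset.mem_inter, iota, Finset.mem_image, Finset.mem_singleton] at hx
      obtain ⟨⟨y, hy, rfl⟩, h⟩ := hx
      exact absurd h (Fin.ne_of_lt (Fin.castSucc_lt_last y))
    · rw [addOn, addOn, ← Finset.union_assoc, ← iota_union]
      exact Finset.union_subset_union (iota_subset.mpr hsub) (le_refl _)
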